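/- Fix λ ∈ ℝ. For i = 1, 2, let p_i : ℝ → ℝ be C¹ and 1-periodic with ∫₀¹ p_i = 0, and define q_i(x) = p_i'(x) + p_i(x)² − ∫₀¹ p_i². Then |∫₀¹ p₁² − ∫₀¹ p₂²| ≤ ‖q₁ − q₂‖_{L^∞[0,1]}. -/

import Mathlib

theorem riccati_functional_lipschitz (lam : ℝ) (p₁ p₂ : ℝ → ℝ)
    (hp₁ : ContDiff ℝ 1 p₁) (hp₂ : ContDiff ℝ 1 p₂)
    (hper₁ : ∀ x, p₁ (x + 1) = p₁ x) (hper₂ : ∀ x, p₂ (x + 1) = p₂ x)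
    (hmean₁ : ∫ x in (0:ℝ)..1, p₁ x = 0) (hmean₂ : ∫ x in (0:ℝ)..1, p₂ x = 0)
    (q₁ q₂ : ℝ → ℝ)
    (hq₁ : ∀ x, q₁ x = deriv p₁ x + (p₁ x) ^ 2 - ∫ t in (0:ℝ)..1, (p₁ t) ^ 2)
    (hq₂ : ∀ x, q₂ x = deriv p₂ x + (p₂ x) ^ 2 - ∫ t in (0:ℝ)..1, (p₂ t) ^ 2) :
    |(∫ x in (0:ℝ)..1, (p₁ x) ^ 2) - ∫ x in (0:ℝ)..1, (p₂ x) ^ 2| ≤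
      sSup ((fun x => |q₁ x - q₂ x|) '' Set.Icc (0:ℝ) 1) := by
  set c : ℝ := (∫ x in (0:ℝ)..1, (p₁ x) ^ 2) - ∫ x in (0:ℝ)..1, (p₂ x) ^ 2 with hc
  set s : ℝ → ℝ := fun x => p₁ x + p₂ x with hs
  have hp₁c : Continuous p₁ := hp₁.continuous
  have hp₂c : Continuous p₂ := hp₂.continuous
  have hdp₁ : Continuous (deriv p₁) := hp₁.continuous_deriv le_rfl
  have hdp₂ : Continuous (deriv p₂) := hp₂.continuous_deriv le_rfl
  have hscont : Continuous s := hp₁c.add hp₂c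
  set S : ℝ → ℝ := fun x => ∫ t in (0:ℝ)..x, s t with hS
  have hSderiv : ∀ x, HasDerivAt S (s x) x := by
    intro x
    exact intervalIntegral.integral_hasDerivAt_right
      (hscont.intervalIntegrable _ _)
      (hscont.stronglyMeasurableAtFilter _ _) hscont.continuousAt
  have hScont : Continuous S :=
    continuous_iff_continuousAt.2 fun x => (hSderiv x).continuousAt
  -- D = q₁ - q₂ expressed in terms of p's
  have hD : ∀ x, q₁ x - q₂ x = deriv p₁ x - deriv p₂ x + s x * (p₁ x - p₂ x) - c := by
    intro x
    rw [hq₁, hq₂, hc, hs]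
    ring
  have hDcont : Continuous (fun x => q₁ x - q₂ x) := by
    have : (fun x => q₁ x - q₂ x) =
        fun x => deriv p₁ x - deriv p₂ x + s x * (p₁ x - p₂ x) - c := funext hD
    rw [this]
    fun_prop
  -- derivative of F = exp(S) * (p₁ - p₂)
  have hΔ : ∀ x, HasDerivAt (fun y => p₁ y - p₂ y) (deriv p₁ x - deriv p₂ x) x := by
    intro x
    exact ((hp₁.differentiable one_ne_zero x).hasDerivAt).sub
      ((hp₂.differentiable one_ne_zero x).hasDerivAt)
  have hF : ∀ x, HasDerivAt (fun y => Real.exp (S y) * (p₁ y - p₂ y))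
      (Real.exp (S x) * (q₁ x - q₂ x + c)) x := by
    intro x
    have h1 : HasDerivAt (fun y => Real.exp (S y)) (Real.exp (S x) * s x) x :=
      (hSderiv x).exp
    have h2 := h1.mul (hΔ x)
    refine h2.congr_deriv ?_
    rw [hD x]
    ring
  have hint : IntervalIntegrable (fun x => Real.exp (S x) * (q₁ x - q₂ x + c))
      MeasureTheory.volume 0 1 :=
    ((Real.continuous_exp.comp hScont).mul (hDcont.add continuous_const)).intervalIntegrable _ _
  have key : (∫ x in (0:ℝ)..1, Real.exp (S x) * (q₁ x - q₂ x + c)) =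
      Real.exp (S 1) * (p₁ 1 - p₂ 1) - Real.exp (S 0) * (p₁ 0 - p₂ 0) :=
    intervalIntegral.integral_eq_sub_of_hasDerivAt (fun x _ => hF x) hint
  have hS1 : S 1 = 0 := by
    rw [hS]
    simp only [hs]
    rw [intervalIntegral.integral_add (hp₁c.intervalIntegrable _ _)
      (hp₂c.intervalIntegrable _ _), hmean₁, hmean₂, add_zero]
  have hS0 : S 0 = 0 := by simp [hS]
  have hper : p₁ 1 - p₂ 1 = p₁ 0 - p₂ 0 := by
    have h1 := hper₁ 0
    have h2 := hper₂ 0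
    rw [zero_add] at h1 h2
    rw [h1, h2]
  have hzero : (∫ x in (0:ℝ)..1, Real.exp (S x) * (q₁ x - q₂ x + c)) = 0 := by
    rw [key, hS1, hS0, hper]; ring
  -- split the integral
  have hint1 : IntervalIntegrable (fun x => Real.exp (S x) * (q₁ x - q₂ x))
      MeasureTheory.volume 0 1 :=
    ((Real.continuous_exp.comp hScont).mul hDcont).intervalIntegrable _ _
  have hint2 : IntervalIntegrable (fun x => Real.exp (S x) * c)
      MeasureTheory.volume 0 1 :=
    ((Real.continuous_exp.comp hScont).mul continuous_const).intervalIntegrable _ _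
  have hsplit : (∫ x in (0:ℝ)..1, Real.exp (S x) * (q₁ x - q₂ x)) +
      c * (∫ x in (0:ℝ)..1, Real.exp (S x)) = 0 := by
    have : (∫ x in (0:ℝ)..1, Real.exp (S x) * (q₁ x - q₂ x + c)) =
        (∫ x in (0:ℝ)..1, Real.exp (S x) * (q₁ x - q₂ x)) +
        ∫ x in (0:ℝ)..1, Real.exp (S x) * c := by
      rw [← intervalIntegral.integral_add hint1 hint2]
      congr 1
      ext x
      ring
    rw [this, intervalIntegral.integral_mul_const, mul_comm] at hzero
    exact hzero
  set I : ℝ := ∫ x in (0:ℝ)..1, Real.exp (S x) with hI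
  have hIpos : 0 < I := by
    rw [hI]
    apply intervalIntegral.intervalIntegral_pos_of_pos_on
      ((Real.continuous_exp.comp hScont).intervalIntegrable _ _)
      (fun x _ => Real.exp_pos _) one_pos
  set M : ℝ := sSup ((fun x => |q₁ x - q₂ x|) '' Set.Icc (0:ℝ) 1) with hM
  have hbdd : BddAbove ((fun x => |q₁ x - q₂ x|) '' Set.Icc (0:ℝ) 1) :=
    (isCompact_Icc.image hDcont.abs).bddAbove
  have hle : ∀ x ∈ Set.Icc (0:ℝ) 1, |q₁ x - q₂ x| ≤ M :=
    fun x hx => le_csSup hbdd ⟨x, hx, rfl⟩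
  -- bound |∫ exp(S) D| ≤ M * I
  have habs : |∫ x in (0:ℝ)..1, Real.exp (S x) * (q₁ x - q₂ x)| ≤ M * I := by
    calc |∫ x in (0:ℝ)..1, Real.exp (S x) * (q₁ x - q₂ x)|
        ≤ ∫ x in (0:ℝ)..1, |Real.exp (S x) * (q₁ x - q₂ x)| :=
          intervalIntegral.abs_integral_le_integral_abs zero_le_one
      _ ≤ ∫ x in (0:ℝ)..1, Real.exp (S x) * M := by
          apply intervalIntegral.integral_mono_on zero_le_one
            (((Real.continuous_exp.comp hScont).mul hDcont).abs.intervalIntegrable _ _)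
            (((Real.continuous_exp.comp hScont).mul continuous_const).intervalIntegrable _ _)
          intro x hx
          simp only [Pi.mul_apply, Function.comp_apply]
          rw [abs_mul, abs_of_pos (Real.exp_pos _)]
          exact mul_le_mul_of_nonneg_left (hle x hx) (Real.exp_pos _).le
      _ = M * I := by rw [intervalIntegral.integral_mul_const, mul_comm]
  have hcI : |c| * I ≤ M * I := by
    have : c * I = -(∫ x in (0:ℝ)..1, Real.exp (S x) * (q₁ x - q₂ x)) := by
      linarith
    calc |c| * I = |c * I| := by rw [abs_mul, abs_of_pos hIpos]
      _ = |∫ x in (0:ℝ)..1, Real.exp (S x) * (q₁ x - q₂ x)| := by rw [this, abs_neg]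
      _ ≤ M * I := habs
  exact le_of_mul_le_mul_right hcI hIpos
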